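/- arXiv:1805.12405 — 4 statements merged into one kernel-verified Lean document; each statement's English description precedes it below -/
import Mathlib

section
/- The word w' defined by w'_k = a if F_a(w,k) = F_a(w,k−1)+1 and w'_k = b otherwise (for 1 ≤ k ≤ |w|) satisfies P_a(w',k) = F_a(w',k) for all 0 ≤ k ≤ |w|; i.e., w' is prefix normal. -/
/- Binary words are `List Bool`, with letter `a = false` and `b = true`
   (so that `a < b` in the `Bool` order). -/

/-- number of `a`'s in the prefix of length `k` -/
def Pa (w : List Bool) (k : ℕ) : ℕ := (w.take k).count false

/-- number of `b`'s in the prefix of length `k` -/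
def Pb (w : List Bool) (k : ℕ) : ℕ := (w.take k).count true

/-- maximum number of `a`'s in a factor of `w` of length `k` -/
noncomputable def Fa (w : List Bool) (k : ℕ) : ℕ :=
  sSup {n | ∃ v : List Bool, v <:+: w ∧ v.length = k ∧ v.count false = n}

/-- maximum number of `b`'s in a factor of `w` of length `k` -/
noncomputable def Fb (w : List Bool) (k : ℕ) : ℕ :=
  sSup {n | ∃ v : List Bool, v <:+: w ∧ v.length = k ∧ v.count true = n}

/-- minimum number of `a`'s in a factor of `w` of length `k` -/
noncomputable def fa (w : List Bool) (k : ℕ) : ℕ :=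
  sInf {n | ∃ v : List Bool, v <:+: w ∧ v.length = k ∧ v.count false = n}

/-- `w` is prefix normal w.r.t. `a`: no factor has more `a`'s than the prefix
    of the same length -/
def PrefixNormal (w : List Bool) : Prop :=
  ∀ v : List Bool, v <:+: w → v.count false ≤ Pa w v.length

/-- position of the `i`-th `a` in `w` -/
noncomputable def posA (w : List Bool) (i : ℕ) : ℕ := sInf {k | Pa w k = i}

/-- `u` is the prefix normal form of `w` w.r.t. `a` -/
def IsPNFa (w u : List Bool) : Prop :=
  u.length = w.length ∧ ∀ k ≤ w.length, Pa u k = Fa w k ∧ Fa u k = Fa w k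

/-- `u` is the prefix normal form of `w` w.r.t. `b` -/
def IsPNFb (w u : List Bool) : Prop :=
  u.length = w.length ∧ ∀ k ≤ w.length, Pb u k = Fb w k ∧ Fb u k = Fb w k

/-- the Parikh set of `w`: Parikh vectors `(|v|_a, |v|_b)` of factors of `w` -/
def ParikhSet (w : List Bool) : Set (ℕ × ℕ) :=
  {p | ∃ v : List Bool, v <:+: w ∧ p = (v.count false, v.count true)}

/-- Lyndon word: strictly lexicographically smaller than each proper nonempty suffix -/
def IsLyndon (w : List Bool) : Prop :=
  w ≠ [] ∧ ∀ v : List Bool, v <:+ w → v ≠ [] → v ≠ w → List.Lex (· < ·) w v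

/-- pre-necklace: a power of the letter `b`, or a prefix of a Lyndon word -/
def PreNecklace (w : List Bool) : Prop :=
  (∃ n, w = List.replicate n true) ∨ ∃ v, IsLyndon v ∧ w <+: v

lemma FaSet_bdd (w : List Bool) (k : ℕ) :
    BddAbove {n | ∃ u : List Bool, u <:+: w ∧ u.length = k ∧ u.count false = n} :=
  ⟨k, fun n ⟨u, _, hl, hc⟩ => by simpa [← hc, ← hl] using (List.count_le_length : u.count false ≤ u.length)⟩

lemma count_le_Fa {w v : List Bool} (h : v <:+: w) : v.count false ≤ Fa w v.length :=
  le_csSup (FaSet_bdd w v.length) ⟨v, h, rfl, rfl⟩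

lemma Fa_le {w : List Bool} {k m : ℕ}
    (h : ∀ v : List Bool, v <:+: w → v.length = k → v.count false ≤ m) : Fa w k ≤ m := by
  rw [Fa]
  rcases Set.eq_empty_or_nonempty
    {n | ∃ v : List Bool, v <:+: w ∧ v.length = k ∧ v.count false = n} with he | hne
  · rw [he, csSup_empty]; exact Nat.zero_le m
  · exact csSup_le hne fun n ⟨v, hv, hl, hc⟩ => hc ▸ h v hv hl

lemma Fa_zero (w : List Bool) : Fa w 0 = 0 :=
  Nat.le_zero.mp (Fa_le fun v _ hl => by simp [List.length_eq_zero_iff.mp hl])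

lemma Fa_subadd (w : List Bool) (i j : ℕ) : Fa w (i + j) ≤ Fa w i + Fa w j := by
  apply Fa_le
  intro v hv hl
  have h1 : v.take i <:+: w := (v.take_prefix i).isInfix.trans hv
  have h2 : v.drop i <:+: w := (v.drop_suffix i).isInfix.trans hv
  have c1 := count_le_Fa h1
  have c2 := count_le_Fa h2
  have l1 : (v.take i).length = i := by simp [hl]
  have l2 : (v.drop i).length = j := by simp [hl]
  rw [l1] at c1
  rw [l2] at c2
  calc v.count false = (v.take i).count false + (v.drop i).count false := by
        rw [← List.count_append, List.take_append_drop]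
    _ ≤ Fa w i + Fa w j := Nat.add_le_add c1 c2

lemma infix_extend {w v : List Bool} (h : v <:+: w) (hl : v.length < w.length) :
    ∃ v', v' <:+: w ∧ v'.length = v.length + 1 ∧ v.count false ≤ v'.count false := by
  obtain ⟨s, t, rfl⟩ := h
  match t with
  | x :: t' =>
    exact ⟨v ++ [x], ⟨s, t', by simp⟩, by simp, by simp [List.count_append]⟩
  | [] =>
    have hs : s ≠ [] := by rintro rfl; simp at hl
    refine ⟨s.getLast hs :: v, ⟨s.dropLast, [], ?_⟩, by simp, ?_⟩
    · rw [show s.dropLast ++ (s.getLast hs :: v) ++ [] = (s.dropLast ++ [s.getLast hs]) ++ v ++ [] by simp,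
        List.dropLast_append_getLast hs]
    · rw [List.count_cons]; omega

lemma Fa_mem {w : List Bool} {k : ℕ} (hk : k ≤ w.length) :
    ∃ v : List Bool, v <:+: w ∧ v.length = k ∧ v.count false = Fa w k := by
  have hne : {n | ∃ v : List Bool, v <:+: w ∧ v.length = k ∧ v.count false = n}.Nonempty :=
    ⟨(w.take k).count false, w.take k, (w.take_prefix k).isInfix, by simp [hk], rfl⟩
  exact Nat.sSup_mem hne (FaSet_bdd w k)

lemma Fa_mono_succ {w : List Bool} {k : ℕ} (hk : k < w.length) : Fa w k ≤ Fa w (k + 1) := by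
  obtain ⟨v, hv, hl, hc⟩ := Fa_mem hk.le
  obtain ⟨v', hv', hl', hc'⟩ := infix_extend hv (hl ▸ hk)
  calc Fa w k = v.count false := hc.symm
    _ ≤ v'.count false := hc'
    _ ≤ Fa w v'.length := count_le_Fa hv'
    _ = Fa w (k + 1) := by rw [hl', hl]

lemma Fa_succ_le {w : List Bool} (k : ℕ) : Fa w (k + 1) ≤ Fa w k + 1 := by
  refine le_trans (Fa_subadd w k 1) (Nat.add_le_add_left ?_ _)
  exact Fa_le fun v _ hl => hl ▸ (List.count_le_length : v.count false ≤ v.length)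


lemma Pa_eq_Fa (w w' : List Bool)
    (hw' : w' = (List.range w.length).map fun k => decide (Fa w (k + 1) = Fa w k)) :
    ∀ k ≤ w.length, Pa w' k = Fa w k := by
  intro k hk
  induction k with
  | zero => simp [Pa, Fa_zero]
  | succ k ih =>
    have hk' : k < w.length := hk
    have hlen : w'.length = w.length := by simp [hw']
    have hget : w'[k]? = some (decide (Fa w (k + 1) = Fa w k)) := by
      rw [hw']
      simp [List.getElem?_map, List.getElem?_range, hk']
    have htake : Pa w' (k + 1) = Pa w' k +
        (if decide (Fa w (k + 1) = Fa w k) = false then 1 else 0) := by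
      unfold Pa
      rw [List.take_succ, hget, List.count_append]
      simp [List.count_singleton']
    rw [htake, ih hk'.le]
    by_cases hFa : Fa w (k + 1) = Fa w k
    · simp [hFa]
    · have h1 := Fa_mono_succ hk'
      have h2 := Fa_succ_le (w := w) k
      simp only [hFa, decide_false]
      simp
      omega

theorem stmt3 (w : List Bool)
    (w' : List Bool)
    (hw' : w' = (List.range w.length).map fun k => decide (Fa w (k + 1) = Fa w k)) :
    ∀ k ≤ w'.length, Pa w' k = Fa w' k := by
  have hlen : w'.length = w.length := by simp [hw']
  have hPa := Pa_eq_Fa w w' hw'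
  intro k hk
  rw [hlen] at hk
  apply le_antisymm
  · have h := count_le_Fa (w := w') (v := w'.take k) (w'.take_prefix k).isInfix
    have hl : (w'.take k).length = k := by simp [hlen, hk]
    rw [hl] at h
    exact h
  · apply Fa_le
    intro v hv hl
    obtain ⟨s, t, heq⟩ := hv
    have hlens : s.length + k + t.length = w.length := by
      rw [← hlen, ← heq]; simp [hl]; omega
    have h1 : Pa w' (s.length + k) = s.count false + v.count false := by
      unfold Pa
      rw [← heq, List.append_assoc, List.take_append, List.count_append]
      congr 2
      · exact List.take_of_length_le (by omega)
      · rw [Nat.add_sub_cancel_left, List.take_left' hl]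
    have h2 : Pa w' s.length = s.count false := by
      unfold Pa
      rw [← heq, List.append_assoc, List.take_left]
    have hs1 : s.length + k ≤ w.length := by omega
    have e1 := hPa (s.length + k) hs1
    have e2 := hPa s.length (by omega)
    have hsub := Fa_subadd w s.length k
    rw [hPa k (by omega)]
    omega
end

section
/- A Parikh vector q = (x,y) occurs in a binary word w (i.e., some factor v of w has |v|_a = x and |v|_b = y) if and only if x + y ≤ |w| and f_a(w, x+y) ≤ x ≤ F_a(w, x+y). -/
lemma count_ft (v : List Bool) : v.count false + v.count true = v.length := by
  induction v with
  | nil => simp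
  | cons h t ih => cases h <;> simp [List.count_cons] <;> omega

lemma ivt_up (f : ℕ → ℕ) (h : ∀ i, f (i+1) ≤ f i + 1) (a x : ℕ) :
    ∀ n, f a ≤ x → x ≤ f (a+n) → ∃ i, a ≤ i ∧ i ≤ a+n ∧ f i = x := by
  intro n
  induction n with
  | zero => intro h1 h2; rw [show a+0 = a from rfl] at h2; exact ⟨a, le_refl _, le_refl _, by omega⟩
  | succ n ih =>
    intro h1 h2
    rw [show a+(n+1) = a+n+1 from rfl] at h2
    by_cases hc : x ≤ f (a+n)
    · obtain ⟨i,hi1,hi2,hi3⟩ := ih h1 hc; exact ⟨i, hi1, by omega, hi3⟩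
    · have := h (a+n); exact ⟨a+n+1, by omega, by omega, by omega⟩

lemma ivt_down (f : ℕ → ℕ) (h : ∀ i, f i ≤ f (i+1) + 1) (a x : ℕ) :
    ∀ n, x ≤ f a → f (a+n) ≤ x → ∃ i, a ≤ i ∧ i ≤ a+n ∧ f i = x := by
  intro n
  induction n with
  | zero => intro h1 h2; rw [show a+0 = a from rfl] at h2; exact ⟨a, le_refl _, le_refl _, by omega⟩
  | succ n ih =>
    intro h1 h2
    rw [show a+(n+1) = a+n+1 from rfl] at h2
    by_cases hc : f (a+n) ≤ x
    · obtain ⟨i,hi1,hi2,hi3⟩ := ih h1 hc; exact ⟨i, hi1, by omega, hi3⟩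
    · have := h (a+n); exact ⟨a+n+1, by omega, by omega, by omega⟩

lemma window_step (w : List Bool) (k i : ℕ) :
    let c := fun j => ((w.drop j).take k).count false
    c (i+1) ≤ c i + 1 ∧ c i ≤ c (i+1) + 1 := by
  intro c
  have h1 : (w.drop i).take (k+1) = (w.drop i).take k ++ ((w.drop i).drop k).take 1 := by
    rw [← List.take_add]
  have h2 : (w.drop i).take (1+k) = (w.drop i).take 1 ++ ((w.drop i).drop 1).take k := by
    rw [← List.take_add]
  have h3 : (w.drop i).drop 1 = w.drop (i+1) := by
    rw [List.drop_drop]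
  have e1 : (((w.drop i).drop k).take 1).count false ≤ 1 :=
    le_trans (List.count_le_length) (by simpa using List.length_take_le 1 _)
  have e2 : (((w.drop i).take 1)).count false ≤ 1 :=
    le_trans (List.count_le_length) (by simpa using List.length_take_le 1 _)
  have q1 : ((w.drop i).take (k+1)).count false = c i + (((w.drop i).drop k).take 1).count false := by
    rw [h1, List.count_append]
  have q2 : ((w.drop i).take (k+1)).count false = ((w.drop i).take 1).count false + c (i+1) := by
    rw [show k+1 = 1+k by omega, h2, List.count_append, h3]
  constructor <;> omega

lemma window_infix (w : List Bool) (k i : ℕ) :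
    (w.drop i).take k <:+: w :=
  ((w.drop i).take_prefix k).isInfix.trans (w.drop_suffix i).isInfix

lemma infix_window (v w : List Bool) (hv : v <:+: w) :
    ∃ i, i + v.length ≤ w.length ∧ (w.drop i).take v.length = v := by
  obtain ⟨s, t, hw⟩ := hv
  refine ⟨s.length, ?_, ?_⟩
  · have := congrArg List.length hw
    simp at this; omega
  · have : w.drop s.length = v ++ t := by
      rw [← hw, List.append_assoc, List.drop_left]
    rw [this, List.take_left]

theorem stmt9 (w : List Bool) (x y : ℕ) :
    (∃ v : List Bool, v <:+: w ∧ v.count false = x ∧ v.count true = y) ↔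
      x + y ≤ w.length ∧ fa w (x + y) ≤ x ∧ x ≤ Fa w (x + y) := by
  set k := x + y with hk
  set S : Set ℕ := {n | ∃ v : List Bool, v <:+: w ∧ v.length = k ∧ v.count false = n} with hS
  have hbdd : BddAbove S := by
    refine ⟨k, fun n hn => ?_⟩
    obtain ⟨v, _, hl, hc⟩ := hn
    rw [← hc, ← hl]; exact List.count_le_length
  constructor
  · rintro ⟨v, hv, hcf, hct⟩
    have hlen : v.length = k := by rw [← count_ft v, hcf, hct]
    have hwl : k ≤ w.length := hlen ▸ hv.length_le
    refine ⟨hwl, ?_, ?_⟩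
    · exact Nat.sInf_le ⟨v, hv, hlen, hcf⟩
    · exact le_csSup hbdd ⟨v, hv, hlen, hcf⟩
  · rintro ⟨hwl, hf, hF⟩
    set c : ℕ → ℕ := fun j => ((w.drop j).take k).count false with hc
    have hne : S.Nonempty := ⟨(w.take k).count false, w.take k, (w.take_prefix k).isInfix,
      by simp [hwl], rfl⟩
    have hmax : Fa w k ∈ S := Nat.sSup_mem hne hbdd
    have hmin : fa w k ∈ S := Nat.sInf_mem hne
    obtain ⟨v1, hv1, hl1, hc1⟩ := hmax
    obtain ⟨v0, hv0, hl0, hc0⟩ := hmin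
    obtain ⟨i1, hi1, hw1⟩ := infix_window v1 w hv1
    obtain ⟨i0, hi0, hw0⟩ := infix_window v0 w hv0
    rw [hl1] at hi1 hw1
    rw [hl0] at hi0 hw0
    have hci0 : c i0 = fa w k := by rw [hc]; simp only; rw [hw0, hc0]
    have hci1 : c i1 = Fa w k := by rw [hc]; simp only; rw [hw1, hc1]
    have hstep : ∀ i, c (i+1) ≤ c i + 1 ∧ c i ≤ c (i+1) + 1 := fun i => window_step w k i
    have key : ∃ i, i + k ≤ w.length ∧ c i = x := by
      rcases le_total i0 i1 with hle | hle
      · obtain ⟨i, _, hi2, hi3⟩ := ivt_up c (fun i => (hstep i).1) i0 x (i1 - i0)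
          (by omega) (by rw [show i0 + (i1 - i0) = i1 by omega, hci1]; omega)
        exact ⟨i, by omega, hi3⟩
      · obtain ⟨i, _, hi2, hi3⟩ := ivt_down c (fun i => (hstep i).2) i1 x (i0 - i1)
          (by omega) (by rw [show i1 + (i0 - i1) = i0 by omega, hci0]; omega)
        exact ⟨i, by omega, hi3⟩
    obtain ⟨i, hik, hix⟩ := key
    refine ⟨(w.drop i).take k, window_infix w k i, hix, ?_⟩
    have hlen : ((w.drop i).take k).length = k := by
      rw [List.length_take, List.length_drop]; omega
    have := count_ft ((w.drop i).take k)
    simp only [hc] at hix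
    rw [hlen] at this
    omega
end

section
/- A binary word w is prefix normal (with respect to a) if and only if for all i,j ≥ 1 with i + j − 1 ≤ |w|_a, it holds that pos_a(w,i) + pos_a(w,j) − 1 ≤ pos_a(w, i+j−1). -/
lemma Pa_mono' (w : List Bool) {k k' : ℕ} (h : k ≤ k') : Pa w k ≤ Pa w k' := by
  unfold Pa
  have : w.take k = (w.take k').take k := by rw [List.take_take, min_eq_left h]
  rw [this]
  exact List.Sublist.count_le false (List.take_sublist _ _)

lemma Pa_step (w : List Bool) (k : ℕ) : Pa w (k + 1) ≤ Pa w k + 1 := by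
  unfold Pa
  rw [List.take_succ, List.count_append]
  have : (w[k]?).toList.count false ≤ 1 := by
    cases h : w[k]? with
    | none => simp
    | some b => cases b <;> simp
  omega

lemma Pa_ivt (w : List Bool) (m : ℕ) : ∀ i ≤ Pa w m, ∃ k ≤ m, Pa w k = i := by
  induction m with
  | zero => intro i hi; exact ⟨0, le_refl 0, by simp [Pa] at hi ⊢; omega⟩
  | succ m ih =>
    intro i hi
    by_cases h : i ≤ Pa w m
    · obtain ⟨k, hk, hPk⟩ := ih i h
      exact ⟨k, hk.trans (Nat.le_succ m), hPk⟩
    · have h1 := Pa_step w m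
      have : i = Pa w (m + 1) := by omega
      exact ⟨m + 1, le_refl _, this.symm⟩

lemma Pa_length (w : List Bool) : Pa w w.length = w.count false := by
  simp [Pa]

lemma Pa_le_count (w : List Bool) (k : ℕ) : Pa w k ≤ w.count false := by
  exact List.Sublist.count_le false (List.take_sublist _ _)

lemma posA_le (w : List Bool) {i k : ℕ} (h : Pa w k = i) : posA w i ≤ k :=
  Nat.sInf_le h

lemma posA_le_of_le (w : List Bool) {i m : ℕ} (h : i ≤ Pa w m) : posA w i ≤ m := by
  obtain ⟨k, hk, hPk⟩ := Pa_ivt w m i h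
  exact (posA_le w hPk).trans hk

lemma Pa_posA (w : List Bool) {i : ℕ} (h : i ≤ w.count false) :
    Pa w (posA w i) = i := by
  have hne : {k | Pa w k = i}.Nonempty := by
    obtain ⟨k, _, hPk⟩ := Pa_ivt w w.length i (by rwa [Pa_length])
    exact ⟨k, hPk⟩
  exact Nat.sInf_mem hne

lemma Pa_take_add (w : List Bool) (d t : ℕ) :
    Pa w (d + t) = Pa w d + ((w.drop d).take t).count false := by
  unfold Pa
  rw [List.take_add, List.count_append]

theorem stmt12 (w : List Bool) :
    PrefixNormal w ↔
      ∀ i j : ℕ, 1 ≤ i → 1 ≤ j → i + j - 1 ≤ w.count false →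
        posA w i + posA w j - 1 ≤ posA w (i + j - 1) := by
  constructor
  · -- forward
    intro hPN i j hi hj hij
    set p := posA w i with hp
    set q := posA w j with hq
    set r := posA w (i + j - 1) with hr
    have hPr : Pa w r = i + j - 1 := Pa_posA w hij
    have hPp : Pa w p = i := Pa_posA w (by omega)
    have hpr : p ≤ r := posA_le_of_le w (by omega)
    have hrlen : r ≤ w.length := posA_le_of_le w (by rw [Pa_length]; exact hij)
    have hp1 : 1 ≤ p := by
      by_contra h
      have : p = 0 := by omega
      rw [this] at hPp
      simp [Pa] at hPp
      omega
    -- Pa w (p-1) = i - 1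
    have hPp1 : Pa w (p - 1) = i - 1 := by
      have h1 : Pa w (p - 1) ≤ Pa w p := Pa_mono' w (by omega)
      have h2 : Pa w p ≤ Pa w (p - 1) + 1 := by
        have := Pa_step w (p - 1)
        rwa [Nat.sub_add_cancel hp1] at this
      have h3 : Pa w (p - 1) ≠ i := by
        intro heq
        have := posA_le w heq
        omega
      omega
    -- the factor
    set v := (w.drop (p - 1)).take (r - (p - 1)) with hv
    have hinf : v <:+: w :=
      (List.take_prefix _ _).isInfix.trans (List.drop_suffix _ _).isInfix
    have hlen : v.length = r - (p - 1) := by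
      rw [hv, List.length_take, List.length_drop]
      omega
    have hcnt : v.count false = j := by
      have := Pa_take_add w (p - 1) (r - (p - 1))
      rw [Nat.add_sub_cancel' (by omega : p - 1 ≤ r)] at this
      rw [← hv] at this
      omega
    have := hPN v hinf
    rw [hcnt, hlen] at this
    have hql : q ≤ r - (p - 1) := posA_le_of_le w this
    omega
  · -- backward
    intro hcond v hinf
    by_cases hc0 : v.count false = 0
    · simp [hc0]
    obtain ⟨s, t, hw⟩ := hinf
    set d := s.length with hd
    set c := v.count false with hcv
    have hc1 : 1 ≤ c := by omega
    have hdrop : w.drop d = v ++ t := by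
      rw [← hw, List.append_assoc]
      rw [List.drop_left' (by rw [hd])]
    have hkey : Pa w (d + v.length) = Pa w d + c := by
      rw [Pa_take_add w d v.length, hdrop, List.take_left]
    set i := Pa w d + 1 with hi
    have hic : i + c - 1 = Pa w (d + v.length) := by omega
    have hcnt_le : i + c - 1 ≤ w.count false := by
      rw [hic]; exact Pa_le_count w _
    have h := hcond i c (by omega) hc1 hcnt_le
    have h1 : posA w (i + c - 1) ≤ d + v.length := posA_le w hic.symm
    have h2 : d + 1 ≤ posA w i := by
      by_contra hcon
      push_neg at hcon
      have hPi : Pa w (posA w i) = i := Pa_posA w (by omega)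
      have : Pa w (posA w i) ≤ Pa w d := Pa_mono' w (by omega)
      omega
    have h3 : posA w c ≤ v.length := by omega
    have h4 : Pa w (posA w c) = c := Pa_posA w (by omega)
    have h5 : Pa w (posA w c) ≤ Pa w v.length := Pa_mono' w h3
    omega
end

section
/- For every binary word w and every n ≥ |w|, the word a^n w is prefix normal. In particular, every binary word is the suffix of infinitely many prefix normal words. -/
lemma countsum_aux (l : List Bool) : l.count false + l.count true = l.length := by
  induction l with
  | nil => simp
  | cons h t ih => cases h <;> simp [List.count_cons] <;> omega

lemma main_aux (w : List Bool) (n : ℕ) (hn : w.length ≤ n) :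
    PrefixNormal (List.replicate n false ++ w) := by
  intro v hv
  obtain ⟨s, t, hst⟩ := hv
  have hlen : s.length + (v.length + t.length) = n + w.length := by
    have := congrArg List.length hst
    simpa [List.length_append] using this
  by_cases hk : v.length ≤ n
  · have : Pa (List.replicate n false ++ w) v.length = v.length := by
      unfold Pa
      rw [List.take_append_of_le_length (by simpa using hk), List.take_replicate]
      simp [Nat.min_eq_left hk]
    rw [this]
    exact List.count_le_length
  · push_neg at hk
    set k := v.length with hkdef
    set j := k - n with hjdef
    have hj1 : 1 ≤ j := by omega
    have hsj : s.length + j ≤ w.length := by omega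
    have hsn : s.length ≤ n := by omega
    have hv2 : v = ((List.replicate n false ++ w).drop s.length).take k := by
      rw [← hst, List.append_assoc, List.drop_left, List.take_left]
    have hdrop : v.drop (n - s.length) = w.take (s.length + j) := by
      rw [hv2, List.drop_take, List.drop_drop]
      have h1 : s.length + (n - s.length) = n := by omega
      have h2 : k - (n - s.length) = s.length + j := by omega
      rw [h1, h2]
      congr 1
      simp [List.drop_append]
    have hsub : List.Sublist (w.take j) v := by
      have h1 := List.take_prefix j (w.take (s.length + j))
      rw [List.take_take, min_eq_left (by omega)] at h1
      have h2 : w.take (s.length + j) <:+ v := hdrop ▸ List.drop_suffix _ _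
      exact (h1.sublist).trans h2.sublist
    have h1 : (w.take j).count true ≤ v.count true := hsub.count_le _
    have h2 : Pa (List.replicate n false ++ w) k = n + (w.take j).count false := by
      unfold Pa
      have : k = n + j := by omega
      rw [this]
      simp [List.take_append, List.take_replicate]
    have h3 := countsum_aux v
    have h4 := countsum_aux (w.take j)
    have h5 : (w.take j).length = j := by simp; omega
    rw [h2]
    omega

theorem stmt16 (w : List Bool) :
    (∀ n, w.length ≤ n → PrefixNormal (List.replicate n false ++ w)) ∧
      {v : List Bool | PrefixNormal v ∧ w <:+ v}.Infinite := by
  constructor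
  · exact fun n hn => main_aux w n hn
  · apply Set.infinite_of_injective_forall_mem
      (f := fun n : ℕ => List.replicate (n + w.length) false ++ w)
    · intro m n hmn
      have := congrArg List.length hmn
      simp at this
      omega
    · intro n
      exact ⟨main_aux w (n + w.length) (by omega), List.suffix_append _ _⟩
end
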